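/- Let P ⊆ ℝ^d be the convex hull of a finite subset of ℤ^d, with 0 in the interior of P, and suppose the polar P° = {y ∈ ℝ^d : ⟨x, y⟩ ≤ 1 for all x ∈ P} is also the convex hull of a finite subset of ℤ^d. Then for every integer m ≥ 1 and every lattice point v ∈ ℤ^d, v lies in the interior of mP if and only if v lies in (m−1)P. -/

import Mathlib

open Pointwise

namespace Stmt2Aux

variable {d : ℕ}

lemma linear_dot (x : Fin d → ℝ) : IsLinearMap ℝ (fun y : Fin d → ℝ => ∑ i, x i * y i) := by
  constructor
  · intro a b
    simp [Pi.add_apply, mul_add, Finset.sum_add_distrib]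
  · intro c a
    simp only [Pi.smul_apply, smul_eq_mul, Finset.mul_sum]
    exact Finset.sum_congr rfl fun i _ => by ring

lemma convex_dot_le (x : Fin d → ℝ) (r : ℝ) :
    Convex ℝ {y : Fin d → ℝ | ∑ i, x i * y i ≤ r} :=
  convex_halfSpace_le (linear_dot x) r

lemma P_eq (S T : Finset (Fin d → ℤ)) (P : Set (Fin d → ℝ))
    (hP : P = convexHull ℝ ((fun v : Fin d → ℤ => fun i => (v i : ℝ)) '' S))
    (h0 : (0 : Fin d → ℝ) ∈ interior P)
    (hpolar : {y : Fin d → ℝ | ∀ x ∈ P, ∑ i, x i * y i ≤ 1} =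
      convexHull ℝ ((fun v : Fin d → ℤ => fun i => (v i : ℝ)) '' T)) :
    P = {x : Fin d → ℝ | ∀ t ∈ T, ∑ i, x i * (t i : ℝ) ≤ 1} := by
  have hPconv : Convex ℝ P := hP ▸ convex_convexHull ℝ _
  have hPcomp : IsCompact P := hP ▸ ((S.finite_toSet.image _).isCompact_convexHull (𝕜 := ℝ))
  have hPclosed : IsClosed P := hPcomp.isClosed
  apply Set.Subset.antisymm
  · intro x hx t ht
    have htmem : (fun i => ((t i : ℝ))) ∈
        convexHull ℝ ((fun v : Fin d → ℤ => fun i => (v i : ℝ)) '' T) :=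
      subset_convexHull ℝ _ ⟨t, ht, rfl⟩
    rw [← hpolar] at htmem
    exact htmem x hx
  · intro x hx
    by_contra hxP
    obtain ⟨f, u, hfu, hux⟩ := geometric_hahn_banach_closed_point hPconv hPclosed hxP
    set y : Fin d → ℝ := fun i => f (Pi.single i 1) with hy
    have hf : ∀ z : Fin d → ℝ, f z = ∑ i, z i * y i := by
      intro z
      have hz : z = ∑ i, z i • (Pi.single i 1 : Fin d → ℝ) := by
        funext j
        simp [Pi.single_apply]
      calc f z = f (∑ i, z i • (Pi.single i 1 : Fin d → ℝ)) := by rw [← hz]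
        _ = ∑ i, z i * y i := by
            rw [map_sum]
            exact Finset.sum_congr rfl fun i _ => by rw [map_smul]; simp [hy]
    have h0P : (0 : Fin d → ℝ) ∈ P := interior_subset h0
    have hu : 0 < u := by have := hfu 0 h0P; simpa using this
    set w : Fin d → ℝ := u⁻¹ • y with hw
    have hwpolar : w ∈ {y : Fin d → ℝ | ∀ x ∈ P, ∑ i, x i * y i ≤ 1} := by
      intro a ha
      have h1 : f a < u := hfu a ha
      rw [hf a] at h1
      have h2 : ∑ i, a i * w i = u⁻¹ * ∑ i, a i * y i := by
        rw [Finset.mul_sum]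
        exact Finset.sum_congr rfl fun i _ => by simp [hw]; ring
      rw [h2, inv_mul_le_iff₀ hu, mul_one]
      exact h1.le
    rw [hpolar] at hwpolar
    have hsub : convexHull ℝ ((fun v : Fin d → ℤ => fun i => (v i : ℝ)) '' T) ⊆
        {y : Fin d → ℝ | ∑ i, x i * y i ≤ 1} := by
      apply convexHull_min _ (convex_dot_le x 1)
      rintro _ ⟨t, ht, rfl⟩
      exact hx t ht
    have hle : ∑ i, x i * w i ≤ 1 := hsub hwpolar
    have heq : ∑ i, x i * w i = u⁻¹ * f x := by
      rw [hf x, Finset.mul_sum]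
      exact Finset.sum_congr rfl fun i _ => by simp [hw]; ring
    rw [heq] at hle
    have : (1:ℝ) < u⁻¹ * f x := by
      rw [← inv_mul_cancel₀ hu.ne']
      exact mul_lt_mul_of_pos_left hux (inv_pos.mpr hu)
    linarith

end Stmt2Aux
namespace Stmt2Aux2
variable {d : ℕ}

lemma smul_P_eq (T : Finset (Fin d → ℤ)) (P : Set (Fin d → ℝ))
    (hQ : P = {x : Fin d → ℝ | ∀ t ∈ T, ∑ i, x i * (t i : ℝ) ≤ 1})
    (c : ℝ) (hc : 0 < c) :
    c • P = {x : Fin d → ℝ | ∀ t ∈ T, ∑ i, x i * (t i : ℝ) ≤ c} := by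
  ext x
  rw [Set.mem_smul_set_iff_inv_smul_mem₀ hc.ne', hQ]
  simp only [Set.mem_setOf_eq, Pi.smul_apply, smul_eq_mul]
  constructor
  · intro h t ht
    have := h t ht
    rw [show (∑ i, c⁻¹ * x i * (t i:ℝ)) = c⁻¹ * ∑ i, x i * (t i:ℝ) by
      rw [Finset.mul_sum]; exact Finset.sum_congr rfl fun i _ => by ring,
      inv_mul_le_iff₀ hc, mul_one] at this
    exact this
  · intro h t ht
    have := h t ht
    rw [show (∑ i, c⁻¹ * x i * (t i:ℝ)) = c⁻¹ * ∑ i, x i * (t i:ℝ) by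
      rw [Finset.mul_sum]; exact Finset.sum_congr rfl fun i _ => by ring,
      inv_mul_le_iff₀ hc, mul_one]
    exact this

lemma interior_smul_P (T : Finset (Fin d → ℤ)) (P : Set (Fin d → ℝ))
    (hQ : P = {x : Fin d → ℝ | ∀ t ∈ T, ∑ i, x i * (t i : ℝ) ≤ 1})
    (c : ℝ) (hc : 0 < c) :
    interior (c • P) = {x : Fin d → ℝ | ∀ t ∈ T, ∑ i, x i * (t i : ℝ) < c} := by
  have hsm := smul_P_eq T P hQ c hc
  apply Set.Subset.antisymm
  · intro x hx t ht
    by_cases hft : (fun i => ((t i : ℝ))) = (0 : Fin d → ℝ)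
    · have : ∀ i, ((t i : ℝ)) = 0 := fun i => congrFun hft i
      simp [this]
      exact hc
    · obtain ⟨ε, hε, hball⟩ := Metric.mem_nhds_iff.mp (mem_interior_iff_mem_nhds.mp hx)
      set ft : Fin d → ℝ := fun i => (t i : ℝ) with hftdef
      have hftn : 0 < ‖ft‖ := norm_pos_iff.mpr hft
      set δ := ε / (2 * ‖ft‖) with hδdef
      have hδ : 0 < δ := by positivity
      have hx' : x + δ • ft ∈ c • P := by
        apply hball
        rw [Metric.mem_ball, dist_eq_norm]
        have : x + δ • ft - x = δ • ft := by abel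
        rw [this, norm_smul]
        simp only [Real.norm_eq_abs, abs_of_pos hδ]
        rw [hδdef, div_mul_eq_mul_div, mul_comm]
        rw [div_lt_iff₀ (by positivity)]
        nlinarith
      rw [hsm] at hx'
      have h1 := hx' t ht
      have h2 : ∑ i, (x + δ • ft) i * ft i
          = (∑ i, x i * ft i) + δ * ∑ i, ft i * ft i := by
        rw [Finset.mul_sum, ← Finset.sum_add_distrib]
        exact Finset.sum_congr rfl fun i _ => by simp; ring
      rw [h2] at h1
      have h3 : 0 < ∑ i, ft i * ft i := by
        apply Finset.sum_pos' (fun i _ => mul_self_nonneg _)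
        obtain ⟨i, hi⟩ := Function.ne_iff.mp hft
        exact ⟨i, Finset.mem_univ i, mul_self_pos.mpr (by simpa using hi)⟩
      nlinarith
  · apply interior_maximal
    · rw [hsm]; intro x hx t ht; exact (hx t ht).le
    · have heq : {x : Fin d → ℝ | ∀ t ∈ T, ∑ i, x i * (t i : ℝ) < c}
          = ⋂ t ∈ T, {x : Fin d → ℝ | ∑ i, x i * (t i : ℝ) < c} := by
        ext x; simp
      rw [heq]
      apply isOpen_biInter_finset
      intro t ht
      exact isOpen_lt (by continuity) continuous_const

end Stmt2Aux2
namespace Stmt2Aux3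
variable {d : ℕ}

lemma convex_dot_le' (x : Fin d → ℝ) (r : ℝ) :
    Convex ℝ {y : Fin d → ℝ | ∑ i, x i * y i ≤ r} := by
  refine convex_halfSpace_le ?_ r
  constructor
  · intro a b; simp [Pi.add_apply, mul_add, Finset.sum_add_distrib]
  · intro c a
    simp only [Pi.smul_apply, smul_eq_mul, Finset.mul_sum]
    exact Finset.sum_congr rfl fun i _ => by ring

lemma eq_zero_of_dot_nonpos (S T : Finset (Fin d → ℤ)) (P : Set (Fin d → ℝ))
    (hP : P = convexHull ℝ ((fun v : Fin d → ℤ => fun i => (v i : ℝ)) '' S))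
    (hpolar : {y : Fin d → ℝ | ∀ x ∈ P, ∑ i, x i * y i ≤ 1} =
      convexHull ℝ ((fun v : Fin d → ℤ => fun i => (v i : ℝ)) '' T))
    (x : Fin d → ℝ) (hx : ∀ t ∈ T, ∑ i, x i * (t i : ℝ) ≤ 0) : x = 0 := by
  by_contra hx0
  have hPcomp : IsCompact P := hP ▸ ((S.finite_toSet.image _).isCompact_convexHull (𝕜 := ℝ))
  obtain ⟨R, hR⟩ := isBounded_iff_forall_norm_le.mp hPcomp.isBounded
  set R' := max R 1 with hR'def
  have hR' : (0:ℝ) < R' := lt_of_lt_of_le one_pos (le_max_right _ _)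
  set Sx := ∑ i, |x i| with hSxdef
  have hSx : 0 < Sx := by
    apply Finset.sum_pos' (fun i _ => abs_nonneg _)
    obtain ⟨i, hi⟩ := Function.ne_iff.mp hx0
    exact ⟨i, Finset.mem_univ i, abs_pos.mpr (by simpa using hi)⟩
  set cc := (R' * Sx)⁻¹ with hccdef
  have hcc : 0 < cc := by positivity
  have hmem : (cc • x) ∈ {y : Fin d → ℝ | ∀ z ∈ P, ∑ i, z i * y i ≤ 1} := by
    intro z hz
    have hzi : ∀ i, |z i| ≤ R' := fun i =>
      le_trans (le_trans (norm_le_pi_norm z i) (hR z hz)) (le_max_left _ _)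
    have heq : ∑ i, z i * (cc • x) i = cc * ∑ i, z i * x i := by
      rw [Finset.mul_sum]
      exact Finset.sum_congr rfl fun i _ => by simp; ring
    have hb : ∑ i, z i * x i ≤ R' * Sx := by
      calc ∑ i, z i * x i ≤ ∑ i, |z i| * |x i| :=
            Finset.sum_le_sum fun i _ => (le_abs_self _).trans (abs_mul _ _).le
        _ ≤ ∑ i, R' * |x i| :=
            Finset.sum_le_sum fun i _ => mul_le_mul_of_nonneg_right (hzi i) (abs_nonneg _)
        _ = R' * Sx := by rw [hSxdef, Finset.mul_sum]
    rw [heq]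
    calc cc * ∑ i, z i * x i ≤ cc * (R' * Sx) := mul_le_mul_of_nonneg_left hb hcc.le
      _ = 1 := inv_mul_cancel₀ (by positivity)
  rw [hpolar] at hmem
  have hsub : convexHull ℝ ((fun v : Fin d → ℤ => fun i => (v i : ℝ)) '' T) ⊆
      {y : Fin d → ℝ | ∑ i, x i * y i ≤ 0} := by
    apply convexHull_min _ (convex_dot_le' x 0)
    rintro _ ⟨t, ht, rfl⟩
    exact hx t ht
  have hle : ∑ i, x i * (cc • x) i ≤ 0 := hsub hmem
  have heq2 : ∑ i, x i * (cc • x) i = cc * ∑ i, x i * x i := by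
    rw [Finset.mul_sum]
    exact Finset.sum_congr rfl fun i _ => by simp; ring
  rw [heq2] at hle
  have hpos : 0 < ∑ i, x i * x i := by
    apply Finset.sum_pos' (fun i _ => mul_self_nonneg _)
    obtain ⟨i, hi⟩ := Function.ne_iff.mp hx0
    exact ⟨i, Finset.mem_univ i, mul_self_pos.mpr (by simpa using hi)⟩
  nlinarith

end Stmt2Aux3

/-- If `P ⊆ ℝ^d` is a reflexive lattice polytope, then for every integer `m ≥ 1`
and every lattice point `v ∈ ℤ^d`, `v` lies in the interior of `mP` if and only if `v` lies
in `(m-1)P`. -/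
theorem stmt_2 (d : ℕ) (S : Finset (Fin d → ℤ)) (P : Set (Fin d → ℝ))
    (hP : P = convexHull ℝ ((fun v : Fin d → ℤ => fun i => (v i : ℝ)) '' S))
    (h0 : (0 : Fin d → ℝ) ∈ interior P)
    (T : Finset (Fin d → ℤ))
    (hpolar : {y : Fin d → ℝ | ∀ x ∈ P, ∑ i, x i * y i ≤ 1} =
      convexHull ℝ ((fun v : Fin d → ℤ => fun i => (v i : ℝ)) '' T)) :
    ∀ m : ℕ, 1 ≤ m → ∀ v : Fin d → ℤ,
      ((fun i => (v i : ℝ)) ∈ interior ((m : ℝ) • P) ↔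
        (fun i => (v i : ℝ)) ∈ ((m - 1 : ℕ) : ℝ) • P) := by
  intro m hm v
  have hQ := Stmt2Aux.P_eq S T P hP h0 hpolar
  have hmpos : (0:ℝ) < (m:ℝ) := by exact_mod_cast Nat.lt_of_lt_of_le Nat.zero_lt_one hm
  have hcast : ∀ t : Fin d → ℤ, ∑ i, ((v i:ℝ)) * ((t i:ℝ)) = ((∑ i, v i * t i : ℤ) : ℝ) := by
    intro t; push_cast; rfl
  have hA : ((fun i => (v i : ℝ)) ∈ ((m - 1 : ℕ) : ℝ) • P) ↔
      ∀ t ∈ T, (∑ i, v i * t i : ℤ) ≤ (m:ℤ) - 1 := by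
    rcases Nat.lt_or_ge m 2 with hm2 | hm2
    · have hm1 : m = 1 := by omega
      subst hm1
      rw [show ((1 - 1 : ℕ):ℝ) = 0 by norm_num,
        Set.zero_smul_set ⟨0, interior_subset h0⟩]
      constructor
      · intro h t ht
        have hz : (fun i => (v i : ℝ)) = (0 : Fin d → ℝ) := by simpa using h
        have hvi : ∀ i, v i = 0 := by
          intro i
          have h2 : ((v i:ℝ)) = 0 := by simpa using congrFun hz i
          exact_mod_cast h2
        simp [hvi]
      · intro h
        have hz : (fun i => (v i : ℝ)) = (0 : Fin d → ℝ) := by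
          apply Stmt2Aux3.eq_zero_of_dot_nonpos S T P hP hpolar
          intro t ht
          rw [hcast t]
          have := h t ht
          have h2 : (∑ i, v i * t i : ℤ) ≤ 0 := by omega
          exact_mod_cast h2
        simp [hz]
    · have hc : (0:ℝ) < ((m-1:ℕ):ℝ) := by
        have : 0 < m - 1 := by omega
        exact_mod_cast this
      rw [Stmt2Aux2.smul_P_eq T P hQ _ hc]
      have hmc : ((m-1:ℕ):ℝ) = (((m:ℤ) - 1 : ℤ) : ℝ) := by
        push_cast [Nat.cast_sub hm]; ring
      constructor
      · intro h t ht
        have := h t ht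
        rw [hcast t, hmc] at this
        exact_mod_cast this
      · intro h t ht
        have := h t ht
        simp only [Set.mem_setOf_eq, hcast, hmc]
        exact_mod_cast this
  rw [hA, Stmt2Aux2.interior_smul_P T P hQ (m:ℝ) hmpos]
  constructor
  · intro h t ht
    have := h t ht
    simp only [Set.mem_setOf_eq, hcast] at this
    have h1 : (∑ i, v i * t i : ℤ) < (m:ℤ) := by exact_mod_cast this
    omega
  · intro h t ht
    have := h t ht
    simp only [Set.mem_setOf_eq, hcast]
    have h1 : (∑ i, v i * t i : ℤ) < (m:ℤ) := by omega
    exact_mod_cast h1
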